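/- The quantity g̃ := v^⊤ζ̃ satisfies 0 ≤ g̃ ≤ ψ_max·‖v‖², where ψ_max = max(ψ_ν,ψ_σ,ψ_η,ψ_ξ) and ‖·‖ is the Euclidean norm on ℝ⁴. -/

import Mathlib

open Finset

noncomputable section

namespace Stmt10

/-- The Euclidean norm of a vector in `ℝ^m`. -/
def enorm {m : ℕ} (z : Fin m → ℝ) : ℝ := Real.sqrt (∑ i, z i ^ 2)

/-- The reference control `ζ⁰(Σ) = (0, Σ, 0, 0)`. -/
def zeta0 (Sig : ℝ) : Fin 4 → ℝ := ![0, Sig, 0, 0]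

/-- The fourth standard basis vector `e₄` of `ℝ⁴`. -/
def e4 : Fin 4 → ℝ := fun i => if i = 3 then 1 else 0

/-- `c^⊤ Ψ v` for the diagonal matrix `Ψ = diag psi`. -/
def cPv (psi c v : Fin 4 → ℝ) : ℝ := ∑ i, c i * psi i * v i

/-- `c^⊤ Ψ c` for the diagonal matrix `Ψ = diag psi`. -/
def cPc (psi c : Fin 4 → ℝ) : ℝ := ∑ i, c i * psi i * c i

/-- The Lagrange multiplier `λ`. -/
def lam (psi c v : Fin 4 → ℝ) : ℝ :=
  if 0 ≤ v 3 - cPv psi c v / cPc psi c * c 3 then cPv psi c v / cPc psi c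
  else (cPv psi c v - c 3 * v 3 * psi 3) / (cPc psi c - c 3 ^ 2 * psi 3)

/-- The Lagrange multiplier `μ = max (-(v₄ - λ c₄)) 0`. -/
def mu (psi c v : Fin 4 → ℝ) : ℝ := max (-(v 3 - lam psi c v * c 3)) 0

/-- `ζ̃ = Ψ (v - λ c + μ e₄)`. -/
def zetaTilde (psi c v : Fin 4 → ℝ) : Fin 4 → ℝ := fun i =>
  psi i * (v i - lam psi c v * c i + mu psi c v * e4 i)

/-- `H₁(ζ) = (1/(2ψ)) (ζ - ζ⁰(Σ))^⊤ Ψ⁻¹ (ζ - ζ⁰(Σ)) - v^⊤ (ζ - ζ⁰(Σ))`. -/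
def H1 (Sig ψ : ℝ) (psi v : Fin 4 → ℝ) (z : Fin 4 → ℝ) : ℝ :=
  (1 / (2 * ψ)) * ∑ i, (z i - zeta0 Sig i) ^ 2 / psi i -
    ∑ i, v i * (z i - zeta0 Sig i)

/-- `ψ_max = max(ψ_ν, ψ_σ, ψ_η, ψ_ξ)`. -/
def psiMax (psi : Fin 4 → ℝ) : ℝ := Finset.univ.sup' Finset.univ_nonempty psi

/-- `g̃ = v^⊤ ζ̃` satisfies `0 ≤ g̃ ≤ ψ_max ‖v‖²`. -/
theorem gTilde_bounds
    (Sig : ℝ) (hSig : 0 < Sig) (psi c v : Fin 4 → ℝ)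
    (hpsi : ∀ i, 0 < psi i) (hc : c 0 ≠ 0) :
    0 ≤ ∑ i, v i * zetaTilde psi c v i ∧
    ∑ i, v i * zetaTilde psi c v i ≤ psiMax psi * enorm v ^ 2 := by
  set l := lam psi c v with hl
  set m := mu psi c v with hm
  have hAdef : cPc psi c = c 0 * psi 0 * c 0 + c 1 * psi 1 * c 1 + c 2 * psi 2 * c 2
      + c 3 * psi 3 * c 3 := by simp [cPc, Fin.sum_univ_four]
  have hBdef : cPv psi c v = c 0 * psi 0 * v 0 + c 1 * psi 1 * v 1 + c 2 * psi 2 * v 2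
      + c 3 * psi 3 * v 3 := by simp [cPv, Fin.sum_univ_four]
  have hp0 := hpsi 0; have hp1 := hpsi 1; have hp2 := hpsi 2; have hp3 := hpsi 3
  have hc0 : 0 < c 0 ^ 2 * psi 0 := by positivity
  have hA3 : 0 < cPc psi c - c 3 ^ 2 * psi 3 := by
    rw [hAdef]
    nlinarith [mul_nonneg (sq_nonneg (c 1)) hp1.le, mul_nonneg (sq_nonneg (c 2)) hp2.le]
  have hA : 0 < cPc psi c := by
    nlinarith [mul_nonneg (sq_nonneg (c 3)) hp3.le]
  have hAne : cPc psi c ≠ 0 := ne_of_gt hA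
  have hA3ne : cPc psi c - c 3 ^ 2 * psi 3 ≠ 0 := ne_of_gt hA3
  -- the two key algebraic facts
  have key : (cPv psi c v - l * cPc psi c + m * (c 3 * psi 3) = 0) ∧
      (m * (psi 3 * (v 3 - l * c 3 + m)) = 0) := by
    by_cases hcase : 0 ≤ v 3 - cPv psi c v / cPc psi c * c 3
    · have hlval : l = cPv psi c v / cPc psi c := by rw [hl, lam, if_pos hcase]
      have hmval : m = 0 := by
        rw [hm, mu, ← hl]
        apply max_eq_right
        rw [hlval]; linarith
      constructor
      · rw [hlval, hmval]; field_simp; ring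
      · rw [hmval]; ring
    · have hlval : l = (cPv psi c v - c 3 * v 3 * psi 3) / (cPc psi c - c 3 ^ 2 * psi 3) := by
        rw [hl, lam, if_neg hcase]
      push_neg at hcase
      have hnum : cPc psi c * (v 3 - cPv psi c v / cPc psi c * c 3) < 0 := by
        exact mul_neg_of_pos_of_neg hA hcase
      have hkey : v 3 - l * c 3 < 0 := by
        have heq : v 3 - l * c 3 =
            cPc psi c * (v 3 - cPv psi c v / cPc psi c * c 3) /
              (cPc psi c - c 3 ^ 2 * psi 3) := by
          rw [hlval]; field_simp; ring
        rw [heq]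
        exact div_neg_of_neg_of_pos hnum hA3
      have hmval : m = -(v 3 - l * c 3) := by
        rw [hm, mu, ← hl]
        apply max_eq_left; linarith
      have hw3 : v 3 - l * c 3 + m = 0 := by rw [hmval]; ring
      constructor
      · rw [hmval, hlval]; field_simp; ring
      · rw [hw3]; ring
  obtain ⟨horth', hcomp⟩ := key
  have horth : c 0 * psi 0 * (v 0 - l * c 0) + c 1 * psi 1 * (v 1 - l * c 1)
      + c 2 * psi 2 * (v 2 - l * c 2) + c 3 * psi 3 * (v 3 - l * c 3 + m) = 0 := by
    rw [hAdef, hBdef] at horth'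
    linear_combination horth'
  -- expand the goal sum
  have hgexp : ∑ i, v i * zetaTilde psi c v i =
      v 0 * (psi 0 * (v 0 - l * c 0)) + v 1 * (psi 1 * (v 1 - l * c 1))
      + v 2 * (psi 2 * (v 2 - l * c 2)) + v 3 * (psi 3 * (v 3 - l * c 3 + m)) := by
    simp [zetaTilde, e4, Fin.sum_univ_four, ← hl, ← hm]
  have h1 : v 0 * (psi 0 * (v 0 - l * c 0)) + v 1 * (psi 1 * (v 1 - l * c 1))
      + v 2 * (psi 2 * (v 2 - l * c 2)) + v 3 * (psi 3 * (v 3 - l * c 3 + m)) =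
      psi 0 * (v 0 - l * c 0) ^ 2 + psi 1 * (v 1 - l * c 1) ^ 2
      + psi 2 * (v 2 - l * c 2) ^ 2 + psi 3 * (v 3 - l * c 3 + m) ^ 2 := by
    linear_combination l * horth - hcomp
  have h2 : psi 0 * v 0 ^ 2 + psi 1 * v 1 ^ 2 + psi 2 * v 2 ^ 2 + psi 3 * v 3 ^ 2
      - (v 0 * (psi 0 * (v 0 - l * c 0)) + v 1 * (psi 1 * (v 1 - l * c 1))
      + v 2 * (psi 2 * (v 2 - l * c 2)) + v 3 * (psi 3 * (v 3 - l * c 3 + m))) =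
      psi 0 * (l * c 0) ^ 2 + psi 1 * (l * c 1) ^ 2 + psi 2 * (l * c 2) ^ 2
      + psi 3 * (l * c 3 - m) ^ 2 := by
    linear_combination l * horth - hcomp
  have he : enorm v ^ 2 = v 0 ^ 2 + v 1 ^ 2 + v 2 ^ 2 + v 3 ^ 2 := by
    rw [enorm, Real.sq_sqrt (by positivity), Fin.sum_univ_four]
  have hmax : ∀ i, psi i ≤ psiMax psi := fun i => Finset.le_sup' psi (Finset.mem_univ i)
  constructor
  · rw [hgexp, h1]
    positivity
  · rw [hgexp, he]
    have hb : ∀ i, psi i * v i ^ 2 ≤ psiMax psi * v i ^ 2 := fun i =>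
      mul_le_mul_of_nonneg_right (hmax i) (sq_nonneg (v i))
    have hb0 := hb 0; have hb1 := hb 1; have hb2 := hb 2; have hb3 := hb 3
    have hq0 := mul_nonneg hp0.le (sq_nonneg (l * c 0))
    have hq1 := mul_nonneg hp1.le (sq_nonneg (l * c 1))
    have hq2 := mul_nonneg hp2.le (sq_nonneg (l * c 2))
    have hq3 := mul_nonneg hp3.le (sq_nonneg (l * c 3 - m))
    linarith [h2]

end Stmt10
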